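/- For every bicolored point set S of n ≥ 2 points in the plane in general position containing at least one red and at least one blue point, every minimum bichromatic spanning tree of S has at most ⌊n²/4⌋ − n + 1 crossings, where a crossing is an unordered pair of distinct edges of the tree that cross each other. -/

import Mathlib

open scoped Classical

noncomputable section

/-- Points in the Euclidean plane. -/
abbrev Pt : Type := EuclideanSpace ℝ (Fin 2)

/-- `S` is in general position: no three (distinct) points of `S` are collinear. -/
def GenPos (S : Finset Pt) : Prop :=
  ∀ p ∈ S, ∀ q ∈ S, ∀ r ∈ S, p ≠ q → p ≠ r → q ≠ r →
    ¬ Collinear ℝ ({p, q, r} : Set Pt)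

/-- The closed segments `[a,b]` and `[c,d]` cross: they share a point that is
interior to both segments. -/
def SegCross (a b c d : Pt) : Prop :=
  ∃ p : Pt, p ∈ openSegment ℝ a b ∧ p ∈ openSegment ℝ c d

/-- Two unordered edges (over vertices lying in the plane) cross. -/
def EdgeCross {S : Finset Pt} (e₁ e₂ : Sym2 ↥S) : Prop :=
  ∃ a b c d : ↥S, e₁ = s(a, b) ∧ e₂ = s(c, d) ∧ SegCross ↑a ↑b ↑c ↑d

/-- A (straight-line drawn) graph is plane if no two of its edges cross. -/
def PlaneGraph {S : Finset Pt} (G : SimpleGraph ↥S) : Prop :=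
  ∀ e₁ ∈ G.edgeSet, ∀ e₂ ∈ G.edgeSet, e₁ ≠ e₂ → ¬ EdgeCross e₁ e₂

/-- Every edge has one red (`true`) and one blue (`false`) endpoint. -/
def Bichromatic {S : Finset Pt} (col : Pt → Bool) (G : SimpleGraph ↥S) : Prop :=
  ∀ u v : ↥S, G.Adj u v → col ↑u ≠ col ↑v

/-- The Euclidean length of an unordered edge. -/
def edgeLen {S : Finset Pt} : Sym2 ↥S → ℝ :=
  Sym2.lift ⟨fun a b => dist (a : Pt) (b : Pt), fun _ _ => dist_comm _ _⟩

/-- The total Euclidean length of the edges of a graph drawn with straight-line edges. -/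
def graphLen {S : Finset Pt} (G : SimpleGraph ↥S) : ℝ :=
  ∑ᶠ e ∈ G.edgeSet, edgeLen e

/-- A bichromatic spanning tree of `S`. -/
def IsBST {S : Finset Pt} (col : Pt → Bool) (G : SimpleGraph ↥S) : Prop :=
  G.IsTree ∧ Bichromatic col G

/-- A minimum bichromatic spanning tree of `S`. -/
def IsMinBST {S : Finset Pt} (col : Pt → Bool) (G : SimpleGraph ↥S) : Prop :=
  IsBST col G ∧ ∀ G' : SimpleGraph ↥S, IsBST col G' → graphLen G ≤ graphLen G'

/-- The set of crossings of a graph: unordered pairs of distinct edges that cross. -/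
def Crossings {S : Finset Pt} (G : SimpleGraph ↥S) : Set (Sym2 (Sym2 ↥S)) :=
  {p | ∃ e₁ e₂ : Sym2 ↥S, p = s(e₁, e₂) ∧ e₁ ∈ G.edgeSet ∧ e₂ ∈ G.edgeSet ∧
    e₁ ≠ e₂ ∧ EdgeCross e₁ e₂}

namespace MinBSTAux

open SimpleGraph

/-! ### Generic graph lemmas -/

variable {V : Type*}

lemma reachable_delete_cases {G : SimpleGraph V} {u v p q : V}
    (h : G.Reachable u v) :
    (G.deleteEdges {s(p,q)}).Reachable u v ∨
    ((G.deleteEdges {s(p,q)}).Reachable u p ∧ (G.deleteEdges {s(p,q)}).Reachable q v) ∨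
    ((G.deleteEdges {s(p,q)}).Reachable u q ∧ (G.deleteEdges {s(p,q)}).Reachable p v) := by
  obtain ⟨w⟩ := h
  induction w with
  | nil => exact Or.inl (Reachable.refl _)
  | @cons u x v hadj w ih =>
    by_cases he : s(u, x) = s(p, q)
    · rw [Sym2.eq_iff] at he
      rcases he with ⟨rfl, rfl⟩ | ⟨rfl, rfl⟩
      · rcases ih with h1 | ⟨h2, h3⟩ | ⟨h4, h5⟩
        · exact Or.inr (Or.inl ⟨Reachable.refl _, h1⟩)
        · exact Or.inl (h2.symm.trans h3)
        · exact Or.inl h5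
      · rcases ih with h1 | ⟨h2, h3⟩ | ⟨h4, h5⟩
        · exact Or.inr (Or.inr ⟨Reachable.refl _, h1⟩)
        · exact Or.inl h3
        · exact Or.inl (h4.symm.trans h5)
    · have hux : (G.deleteEdges {s(p,q)}).Reachable u x :=
        (SimpleGraph.Adj.reachable (by simp [SimpleGraph.deleteEdges_adj, hadj, he]))
      rcases ih with h1 | ⟨h2, h3⟩ | ⟨h4, h5⟩
      · exact Or.inl (hux.trans h1)
      · exact Or.inr (Or.inl ⟨hux.trans h2, h3⟩)
      · exact Or.inr (Or.inr ⟨hux.trans h4, h5⟩)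

lemma reachable_delete_cases' {G : SimpleGraph V} {u v p q : V} {E : Set (Sym2 V)}
    (h : (G.deleteEdges E).Reachable u v) :
    (G.deleteEdges (insert s(p,q) E)).Reachable u v ∨
    ((G.deleteEdges (insert s(p,q) E)).Reachable u p ∧
      (G.deleteEdges (insert s(p,q) E)).Reachable q v) ∨
    ((G.deleteEdges (insert s(p,q) E)).Reachable u q ∧
      (G.deleteEdges (insert s(p,q) E)).Reachable p v) := by
  have hEq : (G.deleteEdges E).deleteEdges {s(p,q)} = G.deleteEdges (insert s(p,q) E) := by
    rw [SimpleGraph.deleteEdges_deleteEdges, Set.union_singleton]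
  have := reachable_delete_cases (p := p) (q := q) h
  rwa [hEq] at this

lemma first_edge_unique {G : SimpleGraph V} {x y u u' : V} (w : G.Walk x y) (hw : w.IsPath)
    (h : s(x,u) ∈ w.edges) (h' : s(x,u') ∈ w.edges) : u = u' := by
  induction w with
  | nil => simp at h
  | @cons a z v hadj w ih =>
    rw [SimpleGraph.Walk.edges_cons, List.mem_cons] at h h'
    have key : ∀ t : V, s(a,t) = s(a,z) ∨ s(a,t) ∈ w.edges → t = z := by
      intro t ht
      rcases ht with ht | ht
      · rw [Sym2.eq_iff] at ht
        rcases ht with ⟨-, rfl⟩ | ⟨rfl, rfl⟩ <;> rfl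
      · exfalso
        have := SimpleGraph.Walk.fst_mem_support_of_mem_edges w ht
        exact (SimpleGraph.Walk.cons_isPath_iff _ _ |>.1 hw).2 this
    rw [key u h, key u' h']

lemma reach_delete_of_not_mem {G : SimpleGraph V} {x y : V} (p : G.Walk x y) {f : Sym2 V}
    (h : f ∉ p.edges) : (G.deleteEdges {f}).Reachable x y :=
  ⟨p.toDeleteEdges {f} (fun e he (hef : e ∈ ({f} : Set (Sym2 V))) => h (by
    rw [Set.mem_singleton_iff] at hef; exact hef ▸ he))⟩

lemma sep_edge_unique {G : SimpleGraph V} (hG : G.Connected) {x y : V} {e e' : Sym2 V}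
    (he : e ∈ G.edgeSet) (hxe : x ∈ e)
    (hsep : ¬ (G.deleteEdges {e}).Reachable x y)
    (he' : e' ∈ G.edgeSet) (hxe' : x ∈ e')
    (hsep' : ¬ (G.deleteEdges {e'}).Reachable x y) : e = e' := by
  obtain ⟨u, rfl⟩ := Sym2.mem_iff_exists.1 hxe
  obtain ⟨u', rfl⟩ := Sym2.mem_iff_exists.1 hxe'
  obtain ⟨w⟩ := hG.preconnected x y
  have hp : (w.toPath : G.Walk x y).IsPath := w.toPath.2
  have h1 : s(x,u) ∈ (w.toPath : G.Walk x y).edges := by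
    by_contra hnot
    exact hsep (reach_delete_of_not_mem _ hnot)
  have h2 : s(x,u') ∈ (w.toPath : G.Walk x y).edges := by
    by_contra hnot
    exact hsep' (reach_delete_of_not_mem _ hnot)
  rw [first_edge_unique _ hp h1 h2]

lemma exists_spanning_tree [Finite V] (G : SimpleGraph V) (hG : G.Connected) :
    ∃ H : SimpleGraph V, H ≤ G ∧ H.IsTree := by
  obtain ⟨n, hn⟩ : ∃ n, G.edgeSet.ncard = n := ⟨_, rfl⟩
  induction n using Nat.strong_induction_on generalizing G with
  | _ n ih =>
  by_cases hac : G.IsAcyclic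
  · exact ⟨G, le_rfl, ⟨hG, hac⟩⟩
  · rw [isAcyclic_iff_forall_edge_isBridge] at hac
    push_neg at hac
    obtain ⟨e, he, hbr⟩ := hac
    induction e with
    | _ a b =>
    have hadj : G.Adj a b := he
    have hreach : (G.deleteEdges {s(a,b)}).Reachable a b := by
      by_contra hnr
      exact hbr hnr
    have hG'conn : (G.deleteEdges {s(a,b)}).Connected := by
      haveI : Nonempty V := hG.nonempty
      apply SimpleGraph.Connected.mk
      intro u v
      rcases reachable_delete_cases (p := a) (q := b) (hG.preconnected u v) with
        h1 | ⟨h2, h3⟩ | ⟨h4, h5⟩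
      · exact h1
      · exact h2.trans (hreach.trans h3)
      · exact h4.trans (hreach.symm.trans h5)
    have hlt : (G.deleteEdges {s(a,b)}).edgeSet.ncard < n := by
      rw [← hn]
      apply Set.ncard_lt_ncard _ (G.edgeSet.toFinite)
      rw [SimpleGraph.edgeSet_deleteEdges]
      constructor
      · exact Set.diff_subset
      · intro hsub
        have := hsub he
        simp at this
    obtain ⟨H, hH1, hH2⟩ := ih _ hlt _ hG'conn rfl
    exact ⟨H, hH1.trans (SimpleGraph.deleteEdges_le _), hH2⟩

/-! ### Geometric lemmas -/

lemma mem_line_aux {a x q : Pt} (h : q ∈ segment ℝ a x) (hq : q ≠ a) :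
    x ∈ line[ℝ, a, q] := by
  rw [segment_eq_image_lineMap] at h
  obtain ⟨t, ht, rfl⟩ := h
  have ht0 : t ≠ 0 := by
    rintro rfl
    simp at hq
  have hx : x = AffineMap.lineMap a (AffineMap.lineMap a x t) t⁻¹ := by
    simp [AffineMap.lineMap_apply, smul_smul, inv_mul_cancel₀ ht0]
  have := AffineMap.lineMap_mem_affineSpan_pair (k := ℝ) t⁻¹ a (AffineMap.lineMap a x t)
  rwa [← hx] at this

lemma openSegment_ne_left {a b p : Pt} (h : p ∈ openSegment ℝ a b) (hab : a ≠ b) : p ≠ a := by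
  rw [openSegment_eq_image_lineMap] at h
  obtain ⟨t, ht, rfl⟩ := h
  obtain ⟨ht0, ht1⟩ := ht
  simp only [AffineMap.lineMap_apply_module]
  intro hc
  apply hab
  have h2 : t • (b - a) = 0 := by linear_combination (norm := module) hc
  rcases smul_eq_zero.1 h2 with h | h
  · exact absurd h (ne_of_gt ht0)
  · have : b = a := by linear_combination (norm := module) h
    exact this.symm

/-- If `p` is interior to `[a,b]` (`a ≠ b`) then `b ∈ line[a,p]`. -/
lemma right_mem_line {a b p : Pt} (hp : p ∈ openSegment ℝ a b) (hab : a ≠ b) :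
    b ∈ line[ℝ, a, p] :=
  mem_line_aux (openSegment_subset_segment ℝ a b hp) (openSegment_ne_left hp hab)

/-- Shared-endpoint crossing forces collinearity. -/
lemma collinear_of_segCross_shared {a b d : Pt} (h : SegCross a b a d)
    (hab : a ≠ b) (had : a ≠ d) : Collinear ℝ ({a, b, d} : Set Pt) := by
  obtain ⟨p, h1, h2⟩ := h
  have hb := right_mem_line h1 hab
  have hd := right_mem_line h2 had
  have := collinear_insert_insert_of_mem_affineSpan_pair hb hd
  exact this.subset (by intro z hz; simp at hz; rcases hz with rfl|rfl|rfl <;> simp)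

/-- Strict quadrilateral inequality for crossing segments. -/
lemma segCross_dist_lt {a b c d : Pt} (h : SegCross a b c d)
    (hab : a ≠ b) (hcd : c ≠ d) (hcol : ¬ Collinear ℝ ({a, b, d} : Set Pt)) :
    dist a d + dist c b < dist a b + dist c d := by
  obtain ⟨p, h1, h2⟩ := h
  have e1 : dist a p + dist p b = dist a b :=
    dist_add_dist_eq_iff.2 (mem_segment_iff_wbtw.1 (openSegment_subset_segment ℝ a b h1))
  have e2 : dist c p + dist p d = dist c d :=
    dist_add_dist_eq_iff.2 (mem_segment_iff_wbtw.1 (openSegment_subset_segment ℝ c d h2))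
  have tcb : dist c b ≤ dist c p + dist p b := dist_triangle c p b
  have tad : dist a d < dist a p + dist p d := by
    rcases lt_or_eq_of_le (dist_triangle a p d) with h' | h'
    · exact h'
    · exfalso
      have hw : Wbtw ℝ a p d := dist_add_dist_eq_iff.1 h'.symm
      have hpd : p ∈ segment ℝ a d := hw.mem_segment
      have hpa : p ≠ a := openSegment_ne_left h1 hab
      have hdline : d ∈ line[ℝ, a, p] := mem_line_aux hpd hpa
      have hbline : b ∈ line[ℝ, a, p] := right_mem_line h1 hab
      have := collinear_insert_insert_of_mem_affineSpan_pair hbline hdline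
      exact hcol (this.subset (by intro z hz; simp at hz; rcases hz with rfl|rfl|rfl <;> simp))
  linarith

lemma segCross_swap_left {a b c d : Pt} (h : SegCross a b c d) : SegCross b a c d := by
  obtain ⟨p, h1, h2⟩ := h
  exact ⟨p, by rwa [openSegment_symm], h2⟩

lemma segCross_swap_right {a b c d : Pt} (h : SegCross a b c d) : SegCross a b d c := by
  obtain ⟨p, h1, h2⟩ := h
  exact ⟨p, h1, by rwa [openSegment_symm]⟩

lemma segCross_comm {a b c d : Pt} (h : SegCross a b c d) : SegCross c d a b := by
  obtain ⟨p, h1, h2⟩ := h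
  exact ⟨p, h2, h1⟩

/-! ### Length lemmas -/

variable {S : Finset Pt}

lemma edgeLen_mk (a b : ↥S) : edgeLen s(a,b) = dist (a : Pt) (b : Pt) := rfl

lemma edgeLen_nonneg (e : Sym2 ↥S) : 0 ≤ edgeLen e := by
  induction e with
  | _ a b => rw [edgeLen_mk]; exact dist_nonneg

lemma graphLen_eq (G : SimpleGraph ↥S) :
    graphLen G = ∑ e ∈ G.edgeSet.toFinite.toFinset, edgeLen e := by
  rw [graphLen, ← finsum_mem_coe_finset, Set.Finite.coe_toFinset]

lemma graphLen_mono {H G : SimpleGraph ↥S} (h : H ≤ G) : graphLen H ≤ graphLen G := by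
  rw [graphLen_eq, graphLen_eq]
  apply Finset.sum_le_sum_of_subset_of_nonneg
  · intro e he
    simp only [Set.Finite.mem_toFinset] at he ⊢
    exact SimpleGraph.edgeSet_mono h he
  · intro e _ _
    exact edgeLen_nonneg e

end MinBSTAux


namespace MinBSTAux

open SimpleGraph

variable {S : Finset Pt} {col : Pt → Bool}

/-- Core exchange lemma: given a crossing in a minimum bichromatic spanning tree with
normalized colors, produce a bichromatic non-edge determining the crossing. -/
lemma crossing_good_core (hgp : GenPos S) {T : SimpleGraph ↥S} (hT : IsMinBST col T)
    {e1 e2 : Sym2 ↥S} (h1 : e1 ∈ T.edgeSet) (h2 : e2 ∈ T.edgeSet) (hne : e1 ≠ e2)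
    {a b c d : ↥S} (he1 : e1 = s(a,b)) (he2 : e2 = s(c,d))
    (hsc : SegCross ↑a ↑b ↑c ↑d) (hca : col ↑a = true) (hcc : col ↑c = true) :
    ∃ x y : ↥S, col ↑x = true ∧ col ↑y = false ∧ s(x,y) ∉ T.edgeSet ∧
      ∃ g h : Sym2 ↥S,
        ((g = e1 ∧ h = e2) ∨ (g = e2 ∧ h = e1)) ∧ x ∈ g ∧ y ∈ h ∧
        ¬ (T.deleteEdges {g}).Reachable x y ∧ ¬ (T.deleteEdges {h}).Reachable x y := by
  have hTree : T.IsTree := hT.1.1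
  have hBi : Bichromatic col T := hT.1.2
  have hconn : T.Connected := hTree.isConnected
  have hacyc : T.IsAcyclic := hTree.IsAcyclic
  have hadj1 : T.Adj a b := by rw [he1] at h1; exact h1
  have hadj2 : T.Adj c d := by rw [he2] at h2; exact h2
  have hab : a ≠ b := hadj1.ne
  have hcd : c ≠ d := hadj2.ne
  have hcb : col ↑b = false := by
    have := hBi a b hadj1; rw [hca] at this
    exact Bool.eq_false_iff.2 (Ne.symm this)
  have hcdcol : col ↑d = false := by
    have := hBi c d hadj2; rw [hcc] at this
    exact Bool.eq_false_iff.2 (Ne.symm this)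
  have had : a ≠ d := by
    intro h; rw [h] at hca; rw [hca] at hcdcol; exact absurd hcdcol (by simp)
  have hbc : b ≠ c := by
    intro h; rw [h] at hcb; rw [hcb] at hcc; exact absurd hcc (by simp)
  -- coercion distinctness
  have hab' : (↑a : Pt) ≠ ↑b := Subtype.coe_injective.ne hab
  have hcd' : (↑c : Pt) ≠ ↑d := Subtype.coe_injective.ne hcd
  have had' : (↑a : Pt) ≠ ↑d := Subtype.coe_injective.ne had
  have hbc' : (↑b : Pt) ≠ ↑c := Subtype.coe_injective.ne hbc
  have hac : a ≠ c := by
    intro h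
    have hbd0 : b ≠ d := by
      intro h'; apply hne; rw [he1, he2, h, h']
    have hbd0' : (↑b : Pt) ≠ ↑d := Subtype.coe_injective.ne hbd0
    subst h
    have hcb' : (↑a : Pt) ≠ ↑b := hab'
    have hcol := collinear_of_segCross_shared hsc hab' hcd'
    exact hgp ↑a a.2 ↑b b.2 ↑d d.2 hab' hcd' hbd0' hcol
  have hac' : (↑a : Pt) ≠ ↑c := Subtype.coe_injective.ne hac
  have hbd : b ≠ d := by
    intro h
    subst h
    have hsc' : SegCross ↑b ↑a ↑b ↑c :=
      segCross_swap_left (segCross_swap_right hsc)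
    have hcol := collinear_of_segCross_shared hsc' (Ne.symm hab') hbc'
    exact hgp ↑b b.2 ↑a a.2 ↑c c.2 (Ne.symm hab') hbc' hac' hcol
  have hbd' : (↑b : Pt) ≠ ↑d := Subtype.coe_injective.ne hbd
  -- quadrilateral inequality
  have hnotcol : ¬ Collinear ℝ ({(↑a : Pt), ↑b, ↑d} : Set Pt) :=
    hgp ↑a a.2 ↑b b.2 ↑d d.2 hab' had' hbd'
  have hquad : dist (↑a : Pt) ↑d + dist (↑c : Pt) ↑b < dist (↑a : Pt) ↑b + dist (↑c : Pt) ↑d :=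
    segCross_dist_lt hsc hab' hcd' hnotcol
  -- the doubly-deleted graph
  set D : SimpleGraph ↥S := T.deleteEdges {e1, e2} with hD
  have hDle1 : D ≤ T.deleteEdges {e1} := by
    intro u v h
    rw [hD] at h
    simp only [SimpleGraph.deleteEdges_adj, Set.mem_insert_iff, Set.mem_singleton_iff] at h ⊢
    tauto
  have hDle2 : D ≤ T.deleteEdges {e2} := by
    intro u v h
    rw [hD] at h
    simp only [SimpleGraph.deleteEdges_adj, Set.mem_insert_iff, Set.mem_singleton_iff] at h ⊢
    tauto
  have hDleT : D ≤ T := SimpleGraph.deleteEdges_le _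
  have hbr1 : ¬ (T.deleteEdges {e1}).Reachable a b := by
    have := (SimpleGraph.isAcyclic_iff_forall_adj_isBridge.1 hacyc hadj1)
    rw [SimpleGraph.isBridge_iff] at this
    rw [he1]
    exact this
  have hbr2 : ¬ (T.deleteEdges {e2}).Reachable c d := by
    have := (SimpleGraph.isAcyclic_iff_forall_adj_isBridge.1 hacyc hadj2)
    rw [SimpleGraph.isBridge_iff] at this
    rw [he2]
    exact this
  have hDab : ¬ D.Reachable a b := fun h => hbr1 (h.mono hDle1)
  have hDcd : ¬ D.Reachable c d := fun h => hbr2 (h.mono hDle2)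
  -- identify double deletions
  have hid1 : T.deleteEdges (insert s(a,b) {e2}) = D := by
    rw [hD, he1]
  have hid2 : T.deleteEdges (insert s(c,d) {e1}) = D := by
    rw [hD, he2]; congr 1
    rw [Set.pair_comm]
  -- decomposition: reachability in T.deleteEdges {e2} projects to D through e1
  have dec1 : ∀ u v : ↥S, (T.deleteEdges {e2}).Reachable u v →
      D.Reachable u v ∨ (D.Reachable u a ∧ D.Reachable b v) ∨
      (D.Reachable u b ∧ D.Reachable a v) := by
    intro u v h
    have := reachable_delete_cases' (p := a) (q := b) (E := ({e2} : Set (Sym2 ↥S))) h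
    rwa [hid1] at this
  have dec2 : ∀ u v : ↥S, (T.deleteEdges {e1}).Reachable u v →
      D.Reachable u v ∨ (D.Reachable u c ∧ D.Reachable d v) ∨
      (D.Reachable u d ∧ D.Reachable c v) := by
    intro u v h
    have := reachable_delete_cases' (p := c) (q := d) (E := ({e1} : Set (Sym2 ↥S))) h
    rwa [hid2] at this
  have decT1 : ∀ u v : ↥S, T.Reachable u v →
      (T.deleteEdges {e1}).Reachable u v ∨
      ((T.deleteEdges {e1}).Reachable u a ∧ (T.deleteEdges {e1}).Reachable b v) ∨
      ((T.deleteEdges {e1}).Reachable u b ∧ (T.deleteEdges {e1}).Reachable a v) := by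
    intro u v h
    have := reachable_delete_cases (p := a) (q := b) h
    rwa [← he1] at this
  have decT2 : ∀ u v : ↥S, T.Reachable u v →
      (T.deleteEdges {e2}).Reachable u v ∨
      ((T.deleteEdges {e2}).Reachable u c ∧ (T.deleteEdges {e2}).Reachable d v) ∨
      ((T.deleteEdges {e2}).Reachable u d ∧ (T.deleteEdges {e2}).Reachable c v) := by
    intro u v h
    have := reachable_delete_cases (p := c) (q := d) h
    rwa [← he2] at this
  -- every vertex reaches one of a, b, c, d in D
  have comp4 : ∀ w : ↥S, D.Reachable w a ∨ D.Reachable w b ∨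
      D.Reachable w c ∨ D.Reachable w d := by
    intro w
    have h0 := hconn.preconnected w a
    rcases decT2 w a h0 with h' | ⟨h', -⟩ | ⟨h', -⟩
    · rcases dec1 w a h' with h'' | ⟨h'', -⟩ | ⟨h'', -⟩
      · exact Or.inl h''
      · exact Or.inl h''
      · exact Or.inr (Or.inl h'')
    · rcases dec1 w c h' with h'' | ⟨h'', -⟩ | ⟨h'', -⟩
      · exact Or.inr (Or.inr (Or.inl h''))
      · exact Or.inl h''
      · exact Or.inr (Or.inl h'')
    · rcases dec1 w d h' with h'' | ⟨h'', -⟩ | ⟨h'', -⟩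
      · exact Or.inr (Or.inr (Or.inr h''))
      · exact Or.inl h''
      · exact Or.inr (Or.inl h'')
  have hfour : D.Reachable a c ∨ D.Reachable a d ∨ D.Reachable b c ∨ D.Reachable b d := by
    have h0 := hconn.preconnected b c
    rcases decT1 b c h0 with h' | ⟨-, h'⟩ | ⟨-, h'⟩
    · rcases dec2 b c h' with h'' | ⟨h'', -⟩ | ⟨h'', -⟩
      · exact Or.inr (Or.inr (Or.inl h''))
      · exact Or.inr (Or.inr (Or.inl h''))
      · exact Or.inr (Or.inr (Or.inr h''))
    · rcases dec2 b c h' with h'' | ⟨h'', -⟩ | ⟨h'', -⟩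
      · exact Or.inr (Or.inr (Or.inl h''))
      · exact Or.inr (Or.inr (Or.inl h''))
      · exact Or.inr (Or.inr (Or.inr h''))
    · rcases dec2 a c h' with h'' | ⟨h'', -⟩ | ⟨h'', -⟩
      · exact Or.inl h''
      · exact Or.inl h''
      · exact Or.inr (Or.inl h'')
  -- the exchange argument: `a ~ c` or `b ~ d` in `D` contradicts minimality
  have exchange : ¬ (D.Reachable a c ∨ D.Reachable b d) := by
    intro hcase
    set T' : SimpleGraph ↥S :=
      SimpleGraph.fromEdgeSet ((T.edgeSet \ {e1, e2}) ∪ {s(a,d), s(c,b)}) with hT'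
    have hDT' : D ≤ T' := by
      have h0 : D = SimpleGraph.fromEdgeSet D.edgeSet :=
        (SimpleGraph.fromEdgeSet_edgeSet D).symm
      rw [h0, hT']
      apply SimpleGraph.fromEdgeSet_mono
      rw [hD, SimpleGraph.edgeSet_deleteEdges]
      exact Set.subset_union_left
    have hT'ad : T'.Adj a d := by
      rw [hT', SimpleGraph.fromEdgeSet_adj]
      exact ⟨Or.inr (by simp), had⟩
    have hT'cb : T'.Adj c b := by
      rw [hT', SimpleGraph.fromEdgeSet_adj]
      exact ⟨Or.inr (by simp), Ne.symm hbc⟩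
    have hreachA : ∀ w : ↥S, T'.Reachable w a := by
      have hda' : T'.Reachable d a := hT'ad.symm.reachable
      have hba' : T'.Reachable b a := by
        rcases hcase with hac0 | hbd0
        · exact (hT'cb.symm.reachable).trans (hac0.mono hDT').symm
        · exact ((hbd0.mono hDT').trans hda')
      have hca' : T'.Reachable c a := by
        rcases hcase with hac0 | hbd0
        · exact (hac0.mono hDT').symm
        · exact (hT'cb.reachable).trans hba'
      intro w
      rcases comp4 w with h' | h' | h' | h'
      · exact h'.mono hDT'
      · exact (h'.mono hDT').trans hba'
      · exact (h'.mono hDT').trans hca'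
      · exact (h'.mono hDT').trans hda'
    have hT'conn : T'.Connected := by
      haveI : Nonempty ↥S := ⟨a⟩
      apply SimpleGraph.Connected.mk
      intro u v
      exact (hreachA u).trans (hreachA v).symm
    obtain ⟨H, hHle, hHtree⟩ := exists_spanning_tree T' hT'conn
    have hHbi : Bichromatic col H := by
      intro u v huv
      have hadj := hHle huv
      rw [hT', SimpleGraph.fromEdgeSet_adj] at hadj
      rcases hadj.1 with hm | hm
      · exact hBi u v hm.1
      · rcases hm with hm | hm
        · rcases Sym2.eq_iff.1 hm with ⟨rfl, rfl⟩ | ⟨rfl, rfl⟩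
          · rw [hca, hcdcol]; simp
          · rw [hca, hcdcol]; simp
        · rw [Set.mem_singleton_iff] at hm
          rcases Sym2.eq_iff.1 hm with ⟨rfl, rfl⟩ | ⟨rfl, rfl⟩
          · rw [hcc, hcb]; simp
          · rw [hcc, hcb]; simp
    -- length comparison
    have hmin := hT.2 H ⟨hHtree, hHbi⟩
    have hlenH : graphLen H ≤ graphLen T' := graphLen_mono hHle
    have hA : graphLen T = ∑ e ∈ T.edgeSet.toFinite.toFinset, edgeLen e := graphLen_eq T
    set A : Finset (Sym2 ↥S) := T.edgeSet.toFinite.toFinset with hAdef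
    have he1A : e1 ∈ A := by rw [hAdef, Set.Finite.mem_toFinset]; exact h1
    have he2A : e2 ∈ A := by rw [hAdef, Set.Finite.mem_toFinset]; exact h2
    have hpairsub : ({e1, e2} : Finset (Sym2 ↥S)) ⊆ A := by
      intro e he
      rcases Finset.mem_insert.1 he with rfl | he
      · exact he1A
      · rw [Finset.mem_singleton] at he; subst he; exact he2A
    have hsubF : T'.edgeSet.toFinite.toFinset ⊆
        (A \ {e1, e2}) ∪ {s(a,d), s(c,b)} := by
      intro e he
      rw [Set.Finite.mem_toFinset] at he
      rw [hT', SimpleGraph.edgeSet_fromEdgeSet] at he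
      rcases he.1 with hm | hm
      · apply Finset.mem_union_left
        rw [Finset.mem_sdiff]
        constructor
        · rw [hAdef, Set.Finite.mem_toFinset]; exact hm.1
        · intro hcon
          rcases Finset.mem_insert.1 hcon with rfl | hcon
          · exact hm.2 (Or.inl rfl)
          · rw [Finset.mem_singleton] at hcon; exact hm.2 (Or.inr hcon)
      · apply Finset.mem_union_right
        rcases hm with hm | hm
        · exact Finset.mem_insert.2 (Or.inl hm)
        · rw [Set.mem_singleton_iff] at hm
          exact Finset.mem_insert.2 (Or.inr (Finset.mem_singleton.2 hm))
    have hsum1 : graphLen T' ≤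
        ∑ e ∈ (A \ {e1, e2}), edgeLen e + ∑ e ∈ ({s(a,d), s(c,b)} : Finset (Sym2 ↥S)), edgeLen e := by
      rw [graphLen_eq]
      calc ∑ e ∈ T'.edgeSet.toFinite.toFinset, edgeLen e
          ≤ ∑ e ∈ ((A \ {e1, e2}) ∪ {s(a,d), s(c,b)}), edgeLen e := by
            apply Finset.sum_le_sum_of_subset_of_nonneg hsubF
            intro e _ _
            exact edgeLen_nonneg e
        _ ≤ _ := by
            have h0 := Finset.sum_union_inter (s₁ := A \ {e1, e2})
              (s₂ := ({s(a,d), s(c,b)} : Finset (Sym2 ↥S))) (f := edgeLen)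
            have h00 : 0 ≤ ∑ e ∈ ((A \ {e1, e2}) ∩ {s(a,d), s(c,b)}), edgeLen e :=
              Finset.sum_nonneg (fun e _ => edgeLen_nonneg e)
            linarith
    have hsum2 : ∑ e ∈ (A \ {e1, e2}), edgeLen e
        = graphLen T - (edgeLen e1 + edgeLen e2) := by
      rw [Finset.sum_sdiff_eq_sub hpairsub, hA]
      rw [Finset.sum_pair hne]
    have hadcb : s(a,d) ≠ s(c,b) := by
      intro hq
      rcases Sym2.eq_iff.1 hq with ⟨h', -⟩ | ⟨h', -⟩
      · exact hac h'
      · exact hab h'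
    have hsum3 : ∑ e ∈ ({s(a,d), s(c,b)} : Finset (Sym2 ↥S)), edgeLen e
        = dist (↑a : Pt) ↑d + dist (↑c : Pt) ↑b := by
      rw [Finset.sum_pair hadcb, edgeLen_mk, edgeLen_mk]
    have hlene1 : edgeLen e1 = dist (↑a : Pt) ↑b := by rw [he1, edgeLen_mk]
    have hlene2 : edgeLen e2 = dist (↑c : Pt) ↑d := by rw [he2, edgeLen_mk]
    rw [hsum2, hsum3, hlene1, hlene2] at hsum1
    linarith
  -- finish: case analysis
  rcases hfour with hAC | hAD | hBC | hBD
  · exact absurd (Or.inl hAC) exchange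
  · -- case: a and d in the same component
    refine ⟨c, b, hcc, hcb, ?_, e2, e1, Or.inr ⟨rfl, rfl⟩, ?_, ?_, ?_, ?_⟩
    · -- s(c,b) is not an edge of T
      intro hmem
      have hne1 : s(c,b) ≠ e1 := by
        rw [he1]; intro hq
        rcases Sym2.eq_iff.1 hq with ⟨h', -⟩ | ⟨h', -⟩
        · exact hac h'.symm
        · exact hbc h'.symm
      have hne2 : s(c,b) ≠ e2 := by
        rw [he2]; intro hq
        rcases Sym2.eq_iff.1 hq with ⟨-, h'⟩ | ⟨h', -⟩
        · exact hbd h'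
        · exact hcd h'
      have hDadj : D.Adj c b := by
        rw [hD, SimpleGraph.deleteEdges_adj]
        refine ⟨hmem, ?_⟩
        intro hcon
        rcases hcon with hcon | hcon
        · exact hne1 hcon
        · exact hne2 hcon
      have hncb : ¬ D.Reachable c b := by
        intro h
        apply hbr1
        have hadjT1 : (T.deleteEdges {e1}).Adj c d := by
          rw [SimpleGraph.deleteEdges_adj]
          refine ⟨hadj2, ?_⟩
          rw [← he2]
          simpa using Ne.symm hne
        exact ((hAD.mono hDle1).trans (hadjT1.symm.reachable)).trans (h.mono hDle1)
      exact hncb hDadj.reachable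
    · rw [he2]; exact Sym2.mem_mk_left c d
    · rw [he1]; exact Sym2.mem_mk_right a b
    · -- ¬ (T \ e2).Reachable c b
      have hncb : ¬ D.Reachable c b := by
        intro h
        apply hbr1
        have hadjT1 : (T.deleteEdges {e1}).Adj c d := by
          rw [SimpleGraph.deleteEdges_adj]
          refine ⟨hadj2, ?_⟩
          rw [← he2]
          simpa using Ne.symm hne
        exact ((hAD.mono hDle1).trans (hadjT1.symm.reachable)).trans (h.mono hDle1)
      intro h
      rcases dec1 c b h with h' | ⟨h', -⟩ | ⟨h', -⟩
      · exact hncb h'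
      · exact hDcd (h'.trans hAD)
      · exact hncb h'
    · -- ¬ (T \ e1).Reachable c b
      have hncb : ¬ D.Reachable c b := by
        intro h
        apply hbr1
        have hadjT1 : (T.deleteEdges {e1}).Adj c d := by
          rw [SimpleGraph.deleteEdges_adj]
          refine ⟨hadj2, ?_⟩
          rw [← he2]
          simpa using Ne.symm hne
        exact ((hAD.mono hDle1).trans (hadjT1.symm.reachable)).trans (h.mono hDle1)
      intro h
      rcases dec2 c b h with h' | ⟨-, h''⟩ | ⟨h', -⟩
      · exact hncb h'
      · exact hDab (hAD.trans h'')
      · exact hDcd h'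
  · -- case: b and c in the same component
    have hnad : ¬ D.Reachable a d := by
      intro h
      apply hbr2
      have hadjT2 : (T.deleteEdges {e2}).Adj a b := by
        rw [SimpleGraph.deleteEdges_adj]
        refine ⟨hadj1, ?_⟩
        rw [← he1]
        simpa using hne
      exact ((hBC.symm.mono hDle2).trans (hadjT2.symm.reachable)).trans (h.mono hDle2)
    refine ⟨a, d, hca, hcdcol, ?_, e1, e2, Or.inl ⟨rfl, rfl⟩, ?_, ?_, ?_, ?_⟩
    · intro hmem
      have hne1 : s(a,d) ≠ e1 := by
        rw [he1]; intro hq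
        rcases Sym2.eq_iff.1 hq with ⟨-, h'⟩ | ⟨h', -⟩
        · exact hbd h'.symm
        · exact hab h'
      have hne2 : s(a,d) ≠ e2 := by
        rw [he2]; intro hq
        rcases Sym2.eq_iff.1 hq with ⟨h', -⟩ | ⟨h', -⟩
        · exact hac h'
        · exact had h'
      have hDadj : D.Adj a d := by
        rw [hD, SimpleGraph.deleteEdges_adj]
        refine ⟨hmem, ?_⟩
        intro hcon
        rcases hcon with hcon | hcon
        · exact hne1 hcon
        · exact hne2 hcon
      exact hnad hDadj.reachable
    · rw [he1]; exact Sym2.mem_mk_left a b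
    · rw [he2]; exact Sym2.mem_mk_right c d
    · intro h
      rcases dec2 a d h with h' | ⟨h', -⟩ | ⟨h', -⟩
      · exact hnad h'
      · exact hDab (h'.trans hBC.symm)
      · exact hnad h'
    · intro h
      rcases dec1 a d h with h' | ⟨-, h''⟩ | ⟨h', -⟩
      · exact hnad h'
      · exact hDcd (hBC.symm.trans h'')
      · exact hDab h'
  · exact absurd (Or.inr hBD) exchange

lemma bool_true_of_ne {x y : Bool} (h : x ≠ y) (hx : x = false) : y = true := by
  rcases Bool.eq_false_or_eq_true y with h' | h'
  · exact h'
  · exact absurd (hx.trans h'.symm) h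

lemma bool_false_of_ne {x y : Bool} (h : x ≠ y) (hx : x = true) : y = false := by
  rcases Bool.eq_false_or_eq_true y with h' | h'
  · exact absurd (hx.trans h'.symm) h
  · exact h'

/-- For every crossing of a minimum bichromatic spanning tree there is a bichromatic
non-edge whose endpoints lie on the two crossing edges and are separated from each
other by the removal of either crossing edge. -/
lemma crossing_good (hgp : GenPos S) {T : SimpleGraph ↥S} (hT : IsMinBST col T)
    {e1 e2 : Sym2 ↥S} (h1 : e1 ∈ T.edgeSet) (h2 : e2 ∈ T.edgeSet) (hne : e1 ≠ e2)
    (hx : EdgeCross e1 e2) :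
    ∃ x y : ↥S, col ↑x = true ∧ col ↑y = false ∧ s(x,y) ∉ T.edgeSet ∧
      ∃ g h : Sym2 ↥S,
        ((g = e1 ∧ h = e2) ∨ (g = e2 ∧ h = e1)) ∧ x ∈ g ∧ y ∈ h ∧
        ¬ (T.deleteEdges {g}).Reachable x y ∧ ¬ (T.deleteEdges {h}).Reachable x y := by
  obtain ⟨a, b, c, d, he1, he2, hsc⟩ := hx
  have hadj1 : T.Adj a b := by rw [he1] at h1; exact h1
  have hadj2 : T.Adj c d := by rw [he2] at h2; exact h2
  have hcne1 := hT.1.2 a b hadj1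
  have hcne2 := hT.1.2 c d hadj2
  rcases Bool.eq_false_or_eq_true (col ↑a) with ha | ha <;>
    rcases Bool.eq_false_or_eq_true (col ↑c) with hc | hc
  · exact crossing_good_core hgp hT h1 h2 hne he1 he2 hsc ha hc
  · exact crossing_good_core hgp hT h1 h2 hne
      he1 (by rw [he2, Sym2.eq_swap])
      (segCross_swap_right hsc)
      ha (bool_true_of_ne hcne2 hc)
  · exact crossing_good_core hgp hT h1 h2 hne
      (by rw [he1, Sym2.eq_swap]) he2
      (segCross_swap_left hsc)
      (bool_true_of_ne hcne1 ha) hc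
  · exact crossing_good_core hgp hT h1 h2 hne
      (by rw [he1, Sym2.eq_swap]) (by rw [he2, Sym2.eq_swap])
      (segCross_swap_right (segCross_swap_left hsc))
      (bool_true_of_ne hcne1 ha) (bool_true_of_ne hcne2 hc)

end MinBSTAux

/-- For every bicolored set of `n ≥ 2` points in general position
with at least one red and one blue point, every minimum bichromatic spanning tree
has at most `⌊n²/4⌋ − n + 1` crossings. -/
theorem minBST_crossings_le
    (S : Finset Pt) (col : Pt → Bool) (hgp : GenPos S) (hn : 2 ≤ S.card)
    (hred : ∃ r ∈ S, col r = true) (hblue : ∃ b ∈ S, col b = false)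
    (T : SimpleGraph ↥S) (hT : IsMinBST col T) :
    (Nat.card (Crossings T) : ℤ) ≤ (S.card : ℤ) ^ 2 / 4 - S.card + 1 := by
  classical
  have hTree : T.IsTree := hT.1.1
  have hconn : T.Connected := hTree.isConnected
  obtain ⟨r0, hr0, hr0c⟩ := hred
  set x0 : ↥S := ⟨r0, hr0⟩ with hx0
  set BP : Set (Sym2 ↥S) :=
    {f | ∃ x y : ↥S, f = s(x,y) ∧ col ↑x = true ∧ col ↑y = false} with hBPdef
  set NEB : Set (Sym2 ↥S) := BP \ T.edgeSet with hNEBdef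
  have hmap : ∀ p : Sym2 (Sym2 ↥S), ∃ f : Sym2 ↥S, p ∈ Crossings T →
      f ∈ NEB ∧ ∃ x y : ↥S, f = s(x,y) ∧ col ↑x = true ∧ col ↑y = false ∧
      ∃ g h : Sym2 ↥S, p = s(g,h) ∧ g ∈ T.edgeSet ∧ h ∈ T.edgeSet ∧ x ∈ g ∧ y ∈ h ∧
        ¬ (T.deleteEdges {g}).Reachable x y ∧ ¬ (T.deleteEdges {h}).Reachable x y := by
    intro p
    by_cases hp : p ∈ Crossings T
    · obtain ⟨e1, e2, hpe, h1, h2, hne, hx⟩ := hp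
      obtain ⟨x, y, hxc, hyc, hnotedge, g, h, hgh, hxg, hyh, hsepg, hseph⟩ :=
        MinBSTAux.crossing_good hgp hT h1 h2 hne hx
      refine ⟨s(x,y), fun _ => ⟨⟨⟨x, y, rfl, hxc, hyc⟩, hnotedge⟩,
        x, y, rfl, hxc, hyc, g, h, ?_, ?_, ?_, hxg, hyh, hsepg, hseph⟩⟩
      · rcases hgh with ⟨rfl, rfl⟩ | ⟨rfl, rfl⟩
        · exact hpe
        · rw [hpe]; exact Sym2.eq_swap
      · rcases hgh with ⟨rfl, -⟩ | ⟨rfl, -⟩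
        · exact h1
        · exact h2
      · rcases hgh with ⟨-, rfl⟩ | ⟨-, rfl⟩
        · exact h2
        · exact h1
    · exact ⟨s(x0, x0), fun hp' => absurd hp' hp⟩
  choose F hF using hmap
  have hinj : Set.InjOn F (Crossings T) := by
    intro p hp q hq hFeq
    obtain ⟨hfN, x, y, hfxy, hxc, hyc, g, h, hpgh, hgE, hhE, hxg, hyh, hsg, hsh⟩ := hF p hp
    obtain ⟨hfN', x', y', hfxy', hxc', hyc', g', h', hpgh', hgE', hhE', hxg', hyh', hsg', hsh'⟩ :=
      hF q hq
    have heq : s(x,y) = s(x',y') := by rw [← hfxy, hFeq, hfxy']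
    have hxy : x = x' ∧ y = y' := by
      rcases Sym2.eq_iff.1 heq with ⟨h1, h2⟩ | ⟨h1, h2⟩
      · exact ⟨h1, h2⟩
      · exfalso
        rw [h1] at hxc
        rw [hyc'] at hxc
        exact Bool.false_ne_true hxc
    obtain ⟨rfl, rfl⟩ := hxy
    have hg : g = g' := MinBSTAux.sep_edge_unique hconn hgE hxg hsg hgE' hxg' hsg'
    have hh : h = h' := MinBSTAux.sep_edge_unique hconn hhE hyh
      (fun hr => hsh hr.symm) hhE' hyh' (fun hr => hsh' hr.symm)
    rw [hpgh, hpgh', hg, hh]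
  have hcount : (Crossings T).ncard ≤ NEB.ncard :=
    Set.ncard_le_ncard_of_injOn F (fun p hp => (hF p hp).1) hinj (NEB.toFinite)
  have hsub : T.edgeSet ⊆ BP := by
    intro e he
    induction e with
    | _ u v =>
      have hadj : T.Adj u v := he
      have hcne := hT.1.2 u v hadj
      rcases Bool.eq_false_or_eq_true (col ↑u) with hu | hu
      · exact ⟨u, v, rfl, hu, MinBSTAux.bool_false_of_ne hcne hu⟩
      · exact ⟨v, u, Sym2.eq_swap.symm, MinBSTAux.bool_true_of_ne hcne hu, hu⟩
  have hNEBcard : NEB.ncard = BP.ncard - T.edgeSet.ncard :=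
    Set.ncard_diff hsub (T.edgeSet.toFinite)
  have hedge_le : T.edgeSet.ncard ≤ BP.ncard := Set.ncard_le_ncard hsub BP.toFinite
  have hecard : T.edgeSet.ncard + 1 = S.card := by
    have h0 := hTree.card_edgeFinset
    rw [Fintype.card_coe] at h0
    rw [← h0]
    congr 1
    rw [← Set.ncard_coe_finset, SimpleGraph.coe_edgeFinset]
  set R : Finset ↥S := Finset.univ.filter (fun x : ↥S => col ↑x = true) with hR
  set Bl : Finset ↥S := Finset.univ.filter (fun x : ↥S => col ↑x = false) with hBl
  have hBPcard : BP.ncard = R.card * Bl.card := by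
    have himage : BP.toFinite.toFinset = (R ×ˢ Bl).image (fun z => s(z.1, z.2)) := by
      ext f
      simp only [Set.Finite.mem_toFinset, Finset.mem_image, Finset.mem_product, hR, hBl,
        Finset.mem_filter, Finset.mem_univ, true_and, hBPdef, Set.mem_setOf_eq]
      constructor
      · rintro ⟨x, y, rfl, hx, hy⟩
        exact ⟨(x, y), ⟨hx, hy⟩, rfl⟩
      · rintro ⟨⟨x, y⟩, ⟨hx, hy⟩, rfl⟩
        exact ⟨x, y, rfl, hx, hy⟩
    have hinj2 : Set.InjOn (fun z : ↥S × ↥S => s(z.1, z.2)) ↑(R ×ˢ Bl) := by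
      rintro ⟨x, y⟩ hxy ⟨x', y'⟩ hxy' hEq
      dsimp only at hxy hxy' hEq
      simp only [Finset.coe_product, Set.mem_prod, Finset.mem_coe, hR, hBl,
        Finset.mem_filter, Finset.mem_univ, true_and] at hxy hxy'
      simp only [Prod.mk.injEq]
      rcases Sym2.eq_iff.1 hEq with ⟨h1, h2⟩ | ⟨h1, h2⟩
      · exact ⟨h1, h2⟩
      · exfalso
        rw [h1] at hxy
        rw [hxy'.2] at hxy
        exact Bool.false_ne_true hxy.1
    rw [Set.ncard_eq_toFinset_card BP BP.toFinite, himage,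
      Finset.card_image_of_injOn hinj2, Finset.card_product]
  have hRBl : R.card + Bl.card = S.card := by
    have h0 := Finset.card_filter_add_card_filter_not
      (s := (Finset.univ : Finset ↥S)) (p := fun x : ↥S => col ↑x = true)
    have h1 : (Finset.univ.filter fun x : ↥S => ¬ col ↑x = true) = Bl := by
      apply Finset.filter_congr
      intro x _
      simp
    rw [h1] at h0
    rw [hR]
    rw [h0, Finset.card_univ, Fintype.card_coe]
  -- arithmetic
  have hcast1 : (Nat.card (Crossings T) : ℤ) = ((Crossings T).ncard : ℤ) := by
    rw [Nat.card_coe_set_eq]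
  have hedge_le' : T.edgeSet.ncard ≤ R.card * Bl.card := by rw [← hBPcard]; exact hedge_le
  have hNEB' : (NEB.ncard : ℤ) = (R.card : ℤ) * Bl.card - T.edgeSet.ncard := by
    rw [hNEBcard, hBPcard]
    push_cast [Nat.cast_sub hedge_le']
    ring
  have hec' : (T.edgeSet.ncard : ℤ) = (S.card : ℤ) - 1 := by
    have := congrArg (fun k : ℕ => (k : ℤ)) hecard
    push_cast at this
    linarith
  have hsq : (R.card : ℤ) * Bl.card * 4 ≤ (S.card : ℤ) ^ 2 := by
    have hsum : (R.card : ℤ) + Bl.card = S.card := by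
      have := congrArg (fun k : ℕ => (k : ℤ)) hRBl
      push_cast at this
      linarith
    nlinarith [sq_nonneg ((R.card : ℤ) - Bl.card)]
  have hdiv : (R.card : ℤ) * Bl.card ≤ (S.card : ℤ) ^ 2 / 4 := by
    rw [Int.le_ediv_iff_mul_le (by norm_num : (0:ℤ) < 4)]
    linarith
  have hfinal : ((Crossings T).ncard : ℤ) ≤ (NEB.ncard : ℤ) := by exact_mod_cast hcount
  rw [hcast1]
  rw [hNEB', hec'] at hfinal
  linarith
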